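/- More generally, let 0 < α < 1, N ≥ 1, ν_1,…,ν_N > 0 with Σ_{i=1}^N ν_i^α = 1, and let T^{(ν_i)}_α be independent subordinators with Laplace exponents λ ↦ (ν_i+λ)^α − ν_i^α. Let γ_t ~ Gamma(t,1) be independent of all of them. Then Σ_{i=1}^N ν_i T^{(ν_i)}_α(γ_t) is Gamma(αt,1)-distributed, i.e. for all λ ≥ 0, E[exp(−λ Σ_i ν_i T^{(ν_i)}_α(γ_t))] = (1+λ)^{-αt}. Equivalently: (1/Γ(t)) ∫₀^∞ u^{t-1} e^{-u} exp(−u Σ_i ((ν_i + λν_i)^α − ν_i^α)) du = (1+λ)^{-αt}. -/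
import Mathlib

open MeasureTheory

/-- for independent Esscher transformed stable(α) subordinators with parameters
`ν_i`, `Σ ν_i^α = 1`, the variable `Σ_i ν_i T^{(ν_i)}_α(γ_t)` is `Gamma(αt,1)` distributed;
stated as the equivalent integral identity. -/
theorem stmt_8 (α t l : ℝ) (hα : 0 < α) (hα1 : α < 1) (ht : 0 < t) (hl : 0 ≤ l)
    (N : ℕ) (hN : 1 ≤ N) (ν : Fin N → ℝ) (hν : ∀ i, 0 < ν i)
    (hsum : ∑ i, (ν i) ^ α = 1) :
    (1 / Real.Gamma t) *
      ∫ u in Set.Ioi (0:ℝ),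
        u ^ (t - 1) * Real.exp (-u) *
          Real.exp (-u * ∑ i, ((ν i + l * ν i) ^ α - (ν i) ^ α))
      = (1 + l) ^ (-(α * t)) := by
  have hs : ∑ i, ((ν i + l * ν i) ^ α - (ν i) ^ α) = (1 + l) ^ α - 1 := by
    have : ∀ i, (ν i + l * ν i) ^ α = (1 + l) ^ α * (ν i) ^ α := by
      intro i
      rw [show ν i + l * ν i = (1 + l) * ν i by ring,
        Real.mul_rpow (by linarith) (hν i).le]
    simp_rw [Finset.sum_sub_distrib, this, ← Finset.mul_sum, hsum, mul_one]
  have h1l : (0:ℝ) < 1 + l := by linarith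
  have hr : (0:ℝ) < (1 + l) ^ α := Real.rpow_pos_of_pos h1l α
  have key : ∫ u in Set.Ioi (0:ℝ),
      u ^ (t - 1) * Real.exp (-u) *
        Real.exp (-u * ∑ i, ((ν i + l * ν i) ^ α - (ν i) ^ α))
      = (1 / (1 + l) ^ α) ^ t * Real.Gamma t := by
    rw [← Real.integral_rpow_mul_exp_neg_mul_Ioi ht hr]
    refine setIntegral_congr_fun measurableSet_Ioi fun u _ ↦ ?_
    rw [hs, mul_assoc, ← Real.exp_add]
    ring_nf
  rw [key]
  have : (1 / (1 + l) ^ α) ^ t = (1 + l) ^ (-(α * t)) := by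
    rw [one_div, ← Real.rpow_neg h1l.le, ← Real.rpow_mul h1l.le, neg_mul]
  rw [this]; field_simp
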